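/- Let k be a commutative ring and n ≥ 1. The cohomology of the commutative DGA (k[x]/(x^{n+1}) ⊗ Γ(sx) ⊗ Λ(sy), D̄) with |x| = 2, |sy| = 2n+1, |sx| = 1, D̄(x) = D̄(sx) = 0 and D̄(sy) = (n+1)·x^n·sx, is isomorphic as a graded k-module to k ⊕ ⊕_{1≤p≤n, i∈ℕ} k·x^p γ^i(sy) ⊕ ⊕_{0≤p≤n−1, i∈ℕ} k·x^p (sx) γ^i(sy) ⊕ ⊕_{i∈ℕ} (k/(n+1)k)·x^n (sx) γ^i(sy) ⊕ ⊕_{i≥1} (_{n+1}k)·γ^i(sy), where _{n+1}k and k/(n+1)k are the kernel and cokernel of multiplication by n+1 on k. -/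

import Mathlib

/-!
STATEMENT 16.  The commutative DGA
`(k[x]/(x^{n+1}) ⊗ Γ(sy) ⊗ Λ(sx), D̄)` with `D̄x = D̄(sx) = 0` and
`D̄(sy) = (n+1)·xⁿ·sx` (extended as a derivation compatible with divided
powers, so `D̄(γ^i(sy)) = (n+1)xⁿ·sx·γ^{i-1}(sy)`) computes the Hochschild
homology of `H^*(ℂPⁿ; k)`.  We model the underlying module by its monomial
basis `x^p (sx)^e γ^i(sy)`, `0 ≤ p ≤ n`, `e ∈ {0,1}`, `i ∈ ℕ`; the
differential sends `x^p γ^i(sy)` (with `i ≥ 1`) to `(n+1)·x^{p+n}(sx)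
γ^{i-1}(sy)`, which vanishes unless `p = 0` by truncation, and kills all
other monomials.  The statement: its homology is, as a `k`-module,
`k ⊕ ⊕_{1≤p≤n, i∈ℕ} k·x^pγ^i(sy) ⊕ ⊕_{0≤p≤n-1, i} k·x^p(sx)γ^i(sy)
⊕ ⊕_i (k/(n+1)k)·xⁿ(sx)γ^i(sy) ⊕ ⊕_{i≥1} (ₙ₊₁k)·γ^i(sy)`.
-/

variable (k : Type*) [CommRing k] (n : ℕ)

/-- Monomial basis `x^p (sx)^e γ^i(sy)`. -/
abbrev CPBasis (n : ℕ) := Fin (n + 1) × Bool × ℕ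

/-- The underlying module of the small Hochschild complex of `H^*(ℂPⁿ)`. -/
abbrev CPModule (k : Type*) [CommRing k] (n : ℕ) := CPBasis n →₀ k

/-- The differential on monomials:
`D̄(x^p γ^i(sy)) = (n+1) x^{p+n} (sx) γ^{i-1}(sy)` for `i ≥ 1`, which is zero
unless `p = 0` (truncation `x^{n+1} = 0`); all other monomials are killed. -/
noncomputable def CPd (g : CPBasis n) : CPModule k n :=
  match g with
  | (p, false, i + 1) =>
      if p = (0 : Fin (n + 1)) then
        (n + 1 : ℤ) • Finsupp.single ((Fin.last n, true, i) : CPBasis n) (1 : k)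
      else 0
  | _ => 0

/-- The differential, extended `k`-linearly. -/
noncomputable def CPdiff : CPModule k n →ₗ[k] CPModule k n :=
  Finsupp.lift (CPModule k n) k (CPBasis n) (CPd k n)



lemma CPd_apply_zero (p : Fin (n+1)) (e : Bool) (j : ℕ) (b : CPBasis n)
    (h : e = true ∨ j = 0 ∨ p ≠ 0) : CPd k n (p, e, j) b = 0 := by
  rcases h with h | h | h
  · subst h; simp [CPd]
  · subst h; cases e <;> simp [CPd]
  · cases e
    · cases j with
      | zero => simp [CPd]
      | succ j => simp [CPd, h]
    · simp [CPd]

lemma CPd_eq (i : ℕ) :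
    CPd k n ((0 : Fin (n+1)), false, i + 1)
      = Finsupp.single ((Fin.last n, true, i) : CPBasis n) ((n : k) + 1) := by
  simp [CPd, Finsupp.smul_single]

lemma CPdiff_apply_last (f : CPModule k n) (i : ℕ) :
    CPdiff k n f (Fin.last n, true, i) = ((n : k) + 1) * f ((0 : Fin (n+1)), false, i + 1) := by
  classical
  rw [CPdiff, Finsupp.lift_apply, Finsupp.sum_apply, Finsupp.sum,
    Finset.sum_eq_single ((0 : Fin (n+1)), false, i + 1)]
  · rw [CPd_eq]
    simp [mul_comm]
    ring
  · rintro ⟨p, e, j⟩ _ hne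
    rcases e with _ | _
    · rcases j with _ | j
      · simp [CPd_apply_zero]
      · by_cases hp : p = 0
        · subst hp
          rw [CPd_eq]
          have : j ≠ i := by rintro rfl; exact hne rfl
          simp [Finsupp.single_apply, this]
        · simp [CPd_apply_zero _ _ _ _ _ _ (Or.inr (Or.inr hp))]
    · simp [CPd_apply_zero]
  · intro h
    simp [Finsupp.notMem_support_iff.mp h]

lemma CPdiff_apply_other (f : CPModule k n) (b : CPBasis n)
    (hb : b.2.1 = false ∨ b.1 ≠ Fin.last n) : CPdiff k n f b = 0 := by
  classical
  rw [CPdiff, Finsupp.lift_apply, Finsupp.sum_apply]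
  apply Finset.sum_eq_zero
  rintro ⟨p, e, j⟩ _
  rcases e with _ | _
  · rcases j with _ | j
    · simp [CPd_apply_zero]
    · by_cases hp : p = 0
      · subst hp
        simp only [CPd_eq, Finsupp.smul_apply]
        obtain ⟨q, e', m⟩ := b
        rcases hb with hb | hb
        · simp_all [Finsupp.single_apply]
        · have h2 : ¬ (Fin.last n = q) := fun h => hb h.symm
          simp_all [Finsupp.single_apply]
      · simp [CPd_apply_zero _ _ _ _ _ _ (Or.inr (Or.inr hp))]
  · simp [CPd_apply_zero]

lemma CPdiff_single (b : CPBasis n) (c : k) :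
    CPdiff k n (Finsupp.single b c) = c • CPd k n b := by
  rw [CPdiff, Finsupp.lift_apply, Finsupp.sum_single_index]
  simp

lemma mem_ker_iff (f : CPModule k n) :
    f ∈ LinearMap.ker (CPdiff k n) ↔
      ∀ i, ((n : k) + 1) * f ((0 : Fin (n+1)), false, i + 1) = 0 := by
  rw [LinearMap.mem_ker]
  constructor
  · intro h i
    rw [← CPdiff_apply_last, h, Finsupp.coe_zero, Pi.zero_apply]
  · intro h
    ext b
    rw [Finsupp.coe_zero, Pi.zero_apply]
    obtain ⟨p, e, m⟩ := b
    rcases e with _ | _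
    · exact CPdiff_apply_other k n f _ (Or.inl rfl)
    · by_cases hp : p = Fin.last n
      · subst hp; rw [CPdiff_apply_last]; exact h m
      · exact CPdiff_apply_other k n f _ (Or.inr hp)

lemma CPdiff_comp_zero : CPdiff k n ∘ₗ CPdiff k n = 0 := by
  apply LinearMap.ext
  intro f
  rw [LinearMap.comp_apply, LinearMap.zero_apply]
  exact (mem_ker_iff k n _).mpr (fun i => by
    rw [CPdiff_apply_other k n f _ (Or.inl rfl), mul_zero])

lemma eq_sum_single_last (f : CPModule k n)
    (h0 : ∀ b : CPBasis n, (b.2.1 = false ∨ b.1 ≠ Fin.last n) → f b = 0) :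
    f = ∑ i ∈ f.support.image (fun b => b.2.2),
        Finsupp.single ((Fin.last n, true, i) : CPBasis n) (f (Fin.last n, true, i)) := by
  have hb : ∀ b ∈ f.support, b = ((Fin.last n, true, b.2.2) : CPBasis n) := by
    rintro ⟨p, e, m⟩ hbm
    rcases e with _ | _
    · exact absurd (h0 _ (Or.inl rfl)) (Finsupp.mem_support_iff.mp hbm)
    · by_cases hp : p = Fin.last n
      · subst hp; rfl
      · exact absurd (h0 _ (Or.inr hp)) (Finsupp.mem_support_iff.mp hbm)
  rw [Finset.sum_image (fun x hx y hy hxy => by rw [hb x hx, hb y hy, hxy])]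
  conv_lhs => rw [← Finsupp.sum_single f, Finsupp.sum]
  exact Finset.sum_congr rfl (fun b hbs => by conv_lhs => rw [hb b hbs])

lemma mem_range_iff (f : CPModule k n) :
    f ∈ LinearMap.range (CPdiff k n) ↔
      (∀ b : CPBasis n, (b.2.1 = false ∨ b.1 ≠ Fin.last n) → f b = 0) ∧
      ∀ i, f (Fin.last n, true, i) ∈ Ideal.span {((n : k) + 1)} := by
  constructor
  · rintro ⟨g, rfl⟩
    refine ⟨fun b hb => CPdiff_apply_other k n g b hb, fun i => ?_⟩
    rw [CPdiff_apply_last]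
    exact Ideal.mem_span_singleton.mpr ⟨_, rfl⟩
  · rintro ⟨h0, hs⟩
    choose c hc using fun i => Ideal.mem_span_singleton.mp (hs i)
    refine ⟨∑ i ∈ f.support.image (fun b => b.2.2),
      Finsupp.single ((0 : Fin (n+1)), false, i + 1) (c i), ?_⟩
    rw [map_sum]
    conv_rhs => rw [eq_sum_single_last k n f h0]
    refine Finset.sum_congr rfl (fun i _ => ?_)
    rw [CPdiff_single, CPd_eq, Finsupp.smul_single, smul_eq_mul, mul_comm, ← hc i]

def ι2 : Fin n × ℕ → CPBasis n := fun pi => (pi.1.succ, false, pi.2)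
def ι3 : Fin n × ℕ → CPBasis n := fun pi => (pi.1.castSucc, true, pi.2)
def ι4 : ℕ → CPBasis n := fun i => (Fin.last n, true, i)
def ι5 : {i : ℕ // 1 ≤ i} → CPBasis n := fun i => ((0 : Fin (n+1)), false, i.1)

lemma ι2_inj : Function.Injective (ι2 n) := by
  rintro ⟨p, i⟩ ⟨q, j⟩ h
  simp only [ι2, Prod.mk.injEq] at h
  exact Prod.ext (Fin.succ_injective n h.1) h.2.2

lemma ι3_inj : Function.Injective (ι3 n) := by
  rintro ⟨p, i⟩ ⟨q, j⟩ h
  simp only [ι3, Prod.mk.injEq] at h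
  exact Prod.ext (Fin.castSucc_injective n h.1) h.2.2

lemma ι4_inj : Function.Injective (ι4 n) := by
  rintro i j h
  simp only [ι4, Prod.mk.injEq, true_and] at h
  exact h

lemma ι5_inj : Function.Injective (ι5 n) := by
  rintro i j h
  simp only [ι5, Prod.mk.injEq, true_and] at h
  exact Subtype.ext h

noncomputable def comp1 : CPModule k n →ₗ[k] k :=
  Finsupp.lapply ((0 : Fin (n+1)), false, 0)

noncomputable def comp2 : CPModule k n →ₗ[k] ((Fin n × ℕ) →₀ k) :=
  Finsupp.lcomapDomain (ι2 n) (ι2_inj n)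

noncomputable def comp3 : CPModule k n →ₗ[k] ((Fin n × ℕ) →₀ k) :=
  Finsupp.lcomapDomain (ι3 n) (ι3_inj n)

noncomputable def comp4 : CPModule k n →ₗ[k] (ℕ →₀ (k ⧸ Ideal.span {((n : k) + 1)})) :=
  Finsupp.mapRange.linearMap (Submodule.mkQ (Ideal.span {((n : k) + 1)})) ∘ₗ
    Finsupp.lcomapDomain (ι4 n) (ι4_inj n)

lemma comp2_apply (f : CPModule k n) (a : Fin n × ℕ) : comp2 k n f a = f (ι2 n a) := rfl
lemma comp3_apply (f : CPModule k n) (a : Fin n × ℕ) : comp3 k n f a = f (ι3 n a) := rfl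
lemma comp4_apply (f : CPModule k n) (i : ℕ) :
    comp4 k n f i = Submodule.Quotient.mk (f (ι4 n i)) := rfl

lemma ker_smul_eq (f : CPModule k n) (hf : f ∈ LinearMap.ker (CPdiff k n))
    (i : {i : ℕ // 1 ≤ i}) :
    f (ι5 n i) ∈ LinearMap.ker (LinearMap.lsmul k k ((n : k) + 1)) := by
  obtain ⟨j, hj⟩ : ∃ j, i.1 = j + 1 := ⟨i.1 - 1, (Nat.succ_pred_eq_of_pos i.2).symm⟩
  rw [LinearMap.mem_ker, LinearMap.lsmul_apply, smul_eq_mul, ι5, hj]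
  exact (mem_ker_iff k n f).mp hf j

noncomputable def comp5 :
    LinearMap.ker (CPdiff k n) →ₗ[k]
      ({i : ℕ // 1 ≤ i} →₀ LinearMap.ker (LinearMap.lsmul k k ((n : k) + 1))) where
  toFun f := Finsupp.onFinset
      (Finsupp.comapDomain (ι5 n) f.1 ((ι5_inj n).injOn)).support
      (fun i => ⟨f.1 (ι5 n i), ker_smul_eq k n f.1 f.2 i⟩)
      (fun i hi => by
        rw [Finsupp.mem_support_iff, Finsupp.comapDomain_apply]
        exact fun h => hi (Subtype.ext h))
  map_add' f g := by
    ext i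
    simp [Finsupp.onFinset_apply]
  map_smul' c f := by
    ext i
    simp [Finsupp.onFinset_apply]

lemma comp5_apply (f : LinearMap.ker (CPdiff k n)) (i : {i : ℕ // 1 ≤ i}) :
    (comp5 k n f i : k) = f.1 (ι5 n i) := rfl

noncomputable def CPphi :
    LinearMap.ker (CPdiff k n) →ₗ[k]
      (k ×
       ((Fin n × ℕ) →₀ k) ×
       ((Fin n × ℕ) →₀ k) ×
       (ℕ →₀ (k ⧸ Ideal.span {((n : k) + 1)})) ×
       ({i : ℕ // 1 ≤ i} →₀ LinearMap.ker (LinearMap.lsmul k k ((n : k) + 1)))) :=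
  ((comp1 k n).comp (LinearMap.ker (CPdiff k n)).subtype).prod
    (((comp2 k n).comp (LinearMap.ker (CPdiff k n)).subtype).prod
      (((comp3 k n).comp (LinearMap.ker (CPdiff k n)).subtype).prod
        (((comp4 k n).comp (LinearMap.ker (CPdiff k n)).subtype).prod (comp5 k n))))

lemma CPphi_eq_zero_iff (f : LinearMap.ker (CPdiff k n)) :
    CPphi k n f = 0 ↔
      comp1 k n f.1 = 0 ∧ comp2 k n f.1 = 0 ∧ comp3 k n f.1 = 0 ∧
        comp4 k n f.1 = 0 ∧ comp5 k n f = 0 := by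
  simp only [CPphi, LinearMap.prod_apply, Function.prod, LinearMap.comp_apply,
    Submodule.subtype_apply, Prod.mk_eq_zero]

lemma mem_range_ι2 {b : CPBasis n} (hb : b ∈ Set.range (ι2 n)) :
    b.1 ≠ 0 ∧ b.2.1 = false := by
  obtain ⟨⟨p, i⟩, rfl⟩ := hb; exact ⟨Fin.succ_ne_zero p, rfl⟩

lemma mem_range_ι3 {b : CPBasis n} (hb : b ∈ Set.range (ι3 n)) :
    b.1 ≠ Fin.last n ∧ b.2.1 = true := by
  obtain ⟨⟨p, i⟩, rfl⟩ := hb; exact ⟨(Fin.castSucc_lt_last p).ne, rfl⟩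

lemma mem_range_ι4 {b : CPBasis n} (hb : b ∈ Set.range (ι4 n)) :
    b.1 = Fin.last n ∧ b.2.1 = true := by
  obtain ⟨i, rfl⟩ := hb; exact ⟨rfl, rfl⟩

lemma mem_range_ι5 {b : CPBasis n} (hb : b ∈ Set.range (ι5 n)) :
    b.1 = 0 ∧ b.2.1 = false ∧ 1 ≤ b.2.2 := by
  obtain ⟨i, rfl⟩ := hb; exact ⟨rfl, rfl, i.2⟩

lemma last_ne_zero (hn : 1 ≤ n) : (Fin.last n : Fin (n + 1)) ≠ 0 := by
  simp only [Fin.ne_iff_vne, Fin.val_last, Fin.val_zero]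
  omega

open Classical in
noncomputable def CPsec : k ⧸ Ideal.span {((n : k) + 1)} → k := fun v =>
  if v = 0 then 0 else (Ideal.Quotient.mk_surjective v).choose

lemma CPsec_zero : CPsec k n 0 = 0 := by
  simp [CPsec]

lemma CPsec_spec (v : k ⧸ Ideal.span {((n : k) + 1)}) :
    Ideal.Quotient.mk (Ideal.span {((n : k) + 1)}) (CPsec k n v) = v := by
  unfold CPsec
  split
  next h => rw [h, map_zero]
  next h => exact (Ideal.Quotient.mk_surjective v).choose_spec

noncomputable def CPF (a : k) (b2 b3 : (Fin n × ℕ) →₀ k)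
    (q : ℕ →₀ (k ⧸ Ideal.span {((n : k) + 1)}))
    (r : {i : ℕ // 1 ≤ i} →₀ LinearMap.ker (LinearMap.lsmul k k ((n : k) + 1))) :
    CPModule k n :=
  Finsupp.single ((0 : Fin (n+1)), false, 0) a
    + Finsupp.mapDomain (ι2 n) b2
    + Finsupp.mapDomain (ι3 n) b3
    + Finsupp.mapDomain (ι4 n) (Finsupp.mapRange (CPsec k n) (CPsec_zero k n) q)
    + Finsupp.mapDomain (ι5 n) (Finsupp.mapRange Subtype.val rfl r)

variable {a : k} {b2 b3 : (Fin n × ℕ) →₀ k}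
  {q : ℕ →₀ (k ⧸ Ideal.span {((n : k) + 1)})}
  {r : {i : ℕ // 1 ≤ i} →₀ LinearMap.ker (LinearMap.lsmul k k ((n : k) + 1))}

lemma CPF_ap1 : CPF k n a b2 b3 q r ((0 : Fin (n+1)), false, 0) = a := by
  rw [CPF, Finsupp.add_apply, Finsupp.add_apply, Finsupp.add_apply, Finsupp.add_apply,
    Finsupp.single_eq_same,
    Finsupp.mapDomain_notin_range _ _ (by rintro ⟨y, hy⟩; simp [ι2, Prod.ext_iff] at hy),
    Finsupp.mapDomain_notin_range _ _ (by rintro ⟨y, hy⟩; simp [ι3, Prod.ext_iff] at hy),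
    Finsupp.mapDomain_notin_range _ _ (by rintro ⟨y, hy⟩; simp [ι4, Prod.ext_iff] at hy),
    Finsupp.mapDomain_notin_range _ _
      (by rintro ⟨y, hy⟩; simp [ι5, Prod.ext_iff] at hy; have := y.2; omega)]
  ring

lemma CPF_ap2 (x : Fin n × ℕ) : CPF k n a b2 b3 q r (ι2 n x) = b2 x := by
  rw [CPF, Finsupp.add_apply, Finsupp.add_apply, Finsupp.add_apply, Finsupp.add_apply,
    Finsupp.single_apply_eq_zero.mpr (fun h => by simp [ι2, Prod.ext_iff] at h),
    Finsupp.mapDomain_apply (ι2_inj n),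
    Finsupp.mapDomain_notin_range _ _ (by rintro ⟨y, hy⟩; simp [ι2, ι3, Prod.ext_iff] at hy),
    Finsupp.mapDomain_notin_range _ _ (by rintro ⟨y, hy⟩; simp [ι2, ι4, Prod.ext_iff] at hy),
    Finsupp.mapDomain_notin_range _ _ (by rintro ⟨y, hy⟩; simp [ι2, ι5, Prod.ext_iff] at hy; first | exact Fin.succ_ne_zero _ hy.1 | exact Fin.succ_ne_zero _ hy.1.symm)]
  ring

lemma CPF_ap3 (x : Fin n × ℕ) : CPF k n a b2 b3 q r (ι3 n x) = b3 x := by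
  rw [CPF, Finsupp.add_apply, Finsupp.add_apply, Finsupp.add_apply, Finsupp.add_apply,
    Finsupp.single_apply_eq_zero.mpr (fun h => by simp [ι3, Prod.ext_iff] at h),
    Finsupp.mapDomain_notin_range _ _ (by rintro ⟨y, hy⟩; simp [ι2, ι3, Prod.ext_iff] at hy),
    Finsupp.mapDomain_apply (ι3_inj n),
    Finsupp.mapDomain_notin_range _ _
      (by rintro ⟨y, hy⟩; simp [ι4, ι3, Prod.ext_iff] at hy
          exact absurd hy.1 (Fin.castSucc_lt_last x.1).ne.symm),
    Finsupp.mapDomain_notin_range _ _ (by rintro ⟨y, hy⟩; simp [ι5, ι3, Prod.ext_iff] at hy)]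
  ring

lemma CPF_ap4 (i : ℕ) : CPF k n a b2 b3 q r (ι4 n i) = CPsec k n (q i) := by
  rw [CPF, Finsupp.add_apply, Finsupp.add_apply, Finsupp.add_apply, Finsupp.add_apply,
    Finsupp.single_apply_eq_zero.mpr (fun h => by simp [ι4, Prod.ext_iff] at h),
    Finsupp.mapDomain_notin_range _ _ (by rintro ⟨y, hy⟩; simp [ι2, ι4, Prod.ext_iff] at hy),
    Finsupp.mapDomain_notin_range _ _
      (by rintro ⟨y, hy⟩; simp [ι3, ι4, Prod.ext_iff] at hy),
    Finsupp.mapDomain_apply (ι4_inj n),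
    Finsupp.mapDomain_notin_range _ _ (by rintro ⟨y, hy⟩; simp [ι5, ι4, Prod.ext_iff] at hy),
    Finsupp.mapRange_apply]
  ring

lemma CPF_ap5 (i : {i : ℕ // 1 ≤ i}) :
    CPF k n a b2 b3 q r (ι5 n i) = (r i).1 := by
  rw [CPF, Finsupp.add_apply, Finsupp.add_apply, Finsupp.add_apply, Finsupp.add_apply,
    Finsupp.single_apply_eq_zero.mpr
      (fun h => by simp [ι5, Prod.ext_iff] at h; have := i.2; omega),
    Finsupp.mapDomain_notin_range _ _ (by rintro ⟨y, hy⟩; simp [ι2, ι5, Prod.ext_iff] at hy),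
    Finsupp.mapDomain_notin_range _ _ (by rintro ⟨y, hy⟩; simp [ι3, ι5, Prod.ext_iff] at hy),
    Finsupp.mapDomain_notin_range _ _ (by rintro ⟨y, hy⟩; simp [ι4, ι5, Prod.ext_iff] at hy),
    Finsupp.mapDomain_apply (ι5_inj n),
    Finsupp.mapRange_apply]
  ring

lemma CPF_mem_ker : CPF k n a b2 b3 q r ∈ LinearMap.ker (CPdiff k n) := by
  rw [mem_ker_iff]
  intro j
  rw [show ((0 : Fin (n+1)), false, j + 1) = ι5 n ⟨j + 1, Nat.le_add_left 1 j⟩ from rfl,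
    CPF_ap5]
  have hr := (r ⟨j + 1, Nat.le_add_left 1 j⟩).2
  rw [LinearMap.mem_ker, LinearMap.lsmul_apply, smul_eq_mul] at hr
  exact hr

theorem free_loop_cohomology_CPn (hn : 1 ≤ n) :
    -- it is a complex
    CPdiff k n ∘ₗ CPdiff k n = 0 ∧
    -- and its homology `ker/im` is the asserted `k`-module: we express the
    -- isomorphism `ker D̄ / im D̄ ≃ T` by a surjection `ker D̄ → T` whose kernel
    -- is exactly the image of `D̄`.
    ∃ φ : LinearMap.ker (CPdiff k n) →ₗ[k]
      (k ×                                     -- the unit `1`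
       ((Fin n × ℕ) →₀ k) ×                    -- `x^p γ^i(sy)`, `1 ≤ p ≤ n`
       ((Fin n × ℕ) →₀ k) ×                    -- `x^p (sx) γ^i(sy)`, `0 ≤ p ≤ n-1`
       (ℕ →₀ (k ⧸ Ideal.span {((n : k) + 1)})) ×       -- `(k/(n+1)k)·xⁿ(sx)γ^i(sy)`
       ({i : ℕ // 1 ≤ i} →₀ LinearMap.ker (LinearMap.lsmul k k ((n : k) + 1)))),
                                               -- `(ₙ₊₁k)·γ^i(sy)`, `i ≥ 1`
      Function.Surjective φ ∧
      LinearMap.ker φ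
        = (LinearMap.range (CPdiff k n)).comap (LinearMap.ker (CPdiff k n)).subtype := by
  refine ⟨CPdiff_comp_zero k n, CPphi k n, ?_, ?_⟩
  · rintro ⟨a, b2, b3, q, r⟩
    refine ⟨⟨CPF k n a b2 b3 q r, CPF_mem_ker k n⟩, ?_⟩
    refine Prod.ext (CPF_ap1 k n) (Prod.ext ?_ (Prod.ext ?_ (Prod.ext ?_ ?_)))
    · ext x
      exact CPF_ap2 k n x
    · ext x
      exact CPF_ap3 k n x
    · ext i
      show Submodule.Quotient.mk (CPF k n a b2 b3 q r (ι4 n i)) = q i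
      rw [CPF_ap4, Ideal.Quotient.mk_eq_mk, CPsec_spec]
    · ext i
      exact CPF_ap5 k n i
  · ext f
    rw [Submodule.mem_comap, LinearMap.mem_ker, Submodule.subtype_apply,
      CPphi_eq_zero_iff, mem_range_iff]
    constructor
    · rintro ⟨h1, h2, h3, h4, h5⟩
      constructor
      · rintro ⟨p, e, m⟩ hb
        rcases e with _ | _
        · by_cases hp : p = 0
          · subst hp
            cases m with
            | zero => exact h1
            | succ j =>
              simpa [Subtype.ext_iff, comp5_apply, ι5] using
                DFunLike.congr_fun h5 ⟨j + 1, Nat.le_add_left 1 j⟩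
          · obtain ⟨q0, rfl⟩ := Fin.exists_succ_eq.mpr hp
            simpa [comp2_apply, ι2] using DFunLike.congr_fun h2 (q0, m)
        · rcases hb with hb | hb
          · simp at hb
          · obtain ⟨q0, rfl⟩ := Fin.exists_castSucc_eq.mpr hb
            simpa [comp3_apply, ι3] using DFunLike.congr_fun h3 (q0, m)
      · intro i
        have h := DFunLike.congr_fun h4 i
        rw [comp4_apply] at h
        simp only [Finsupp.coe_zero, Pi.zero_apply] at h
        exact (Submodule.Quotient.mk_eq_zero _).mp h
    · rintro ⟨h0, hs⟩
      refine ⟨h0 _ (Or.inl rfl), ?_, ?_, ?_, ?_⟩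
      · ext x
        rw [comp2_apply]
        simpa using h0 (ι2 n x) (Or.inl rfl)
      · ext x
        rw [comp3_apply]
        simpa using h0 (ι3 n x) (Or.inr (Fin.castSucc_lt_last x.1).ne)
      · ext i
        rw [comp4_apply]
        simpa [ι4] using (Submodule.Quotient.mk_eq_zero _).mpr (hs i)
      · ext i
        rw [comp5_apply]
        simpa using h0 (ι5 n i) (Or.inl rfl)
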